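/- Consider two groups λ and λ+1 replaced at times t_λ < t_{λ+1} in a feasible schedule, where every individual in λ has not-used-residual lifetime at least ε_λ > 1. If t_{λ+1} ≥ t_λ + ε_λ, then delaying all replacements in group λ to time t_λ + ε_λ − 1 preserves feasibility and total cost, and the minimum not-used-residual lifetime of the shifted group becomes exactly 1. -/
import Mathlib


open Finset

/-- Feasibility: every individual is replaced in `{1,…}` no later than its failure time. -/
def Feasible {ι : Type*} (f : ι → ℕ) (τ : ι → ℕ) : Prop :=
  ∀ i, 1 ≤ τ i ∧ τ i ≤ f i

/-- Total cost: corrective cost at the failure time, preventive cost strictly earlier, plus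
one setup cost `d` per distinct replacement time used. -/
noncomputable def totalCost {ι : Type*} [Fintype ι] [DecidableEq ι] (f : ι → ℕ)
    (cpr ccr : ι → ℝ) (d : ℝ) (τ : ι → ℕ) : ℝ :=
  (∑ i, if τ i = f i then ccr i else cpr i) + d * ((Finset.univ.image τ).card : ℝ)

/-- Scenario 1 in the proof of Theorem 1: a group `G` is replaced at time `t0`, its minimum
not-used-residual lifetime is `ε > 1` (every member satisfies `t0 + ε ≤ f i`, with equality
attained), no other individual is replaced at `t0` or at any time in `(t0, t0 + ε)`.
Then delaying the whole group to `t0 + ε − 1` preserves feasibility and total cost, and the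
minimum not-used-residual lifetime of the shifted group becomes exactly `1`. -/
theorem delay_group_preserves_cost
    {ι : Type*} [Fintype ι] [DecidableEq ι]
    (f : ι → ℕ) (cpr ccr : ι → ℝ) (d : ℝ)
    (hc : ∀ i, cpr i < ccr i) (hd : 0 < d)
    (τ : ι → ℕ) (hτ : Feasible f τ)
    (G : Finset ι) (t0 ε : ℕ)
    (hG : G.Nonempty) (hε : 1 < ε)
    (hτG : ∀ i ∈ G, τ i = t0)
    (hres : ∀ i ∈ G, t0 + ε ≤ f i)
    (hattain : ∃ i ∈ G, f i = t0 + ε)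
    (honly : ∀ i ∉ G, τ i ≠ t0)
    (hgap : ∀ i ∉ G, τ i ≤ t0 ∨ t0 + ε ≤ τ i) :
    Feasible f (fun i => if i ∈ G then t0 + ε - 1 else τ i) ∧
    totalCost f cpr ccr d (fun i => if i ∈ G then t0 + ε - 1 else τ i)
      = totalCost f cpr ccr d τ ∧
    (∀ i ∈ G, 1 ≤ f i - (t0 + ε - 1)) ∧
    (∃ i ∈ G, f i - (t0 + ε - 1) = 1) := by
  obtain ⟨i0, hi0⟩ := hG
  have ht01 : 1 ≤ t0 := by
    have := (hτ i0).1
    rw [hτG i0 hi0] at this; exact this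
  set s := t0 + ε - 1 with hs
  have hts : t0 < s := by omega
  have hslt : ∀ i ∈ G, s < f i := fun i hi => by
    have := hres i hi; omega
  have hsnot : s ∉ Finset.univ.image τ := by
    simp only [Finset.mem_image, Finset.mem_univ, true_and]
    rintro ⟨i, hi⟩
    by_cases hiG : i ∈ G
    · have := hτG i hiG; omega
    · rcases hgap i hiG with h | h <;> omega
  have ht0mem : t0 ∈ Finset.univ.image τ := by
    simp only [Finset.mem_image, Finset.mem_univ, true_and]
    exact ⟨i0, hτG i0 hi0⟩
  have himg : Finset.univ.image (fun i => if i ∈ G then s else τ i)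
      = insert s ((Finset.univ.image τ).erase t0) := by
    ext a
    simp only [Finset.mem_image, Finset.mem_univ, true_and, Finset.mem_insert,
      Finset.mem_erase]
    constructor
    · rintro ⟨i, hi⟩
      by_cases hiG : i ∈ G
      · left; simp [hiG] at hi; omega
      · right
        simp [hiG] at hi
        exact ⟨by rw [← hi]; exact honly i hiG, ⟨i, hi⟩⟩
    · rintro (rfl | ⟨hne, i, hi⟩)
      · exact ⟨i0, by simp [hi0]⟩
      · have hiG : i ∉ G := fun h => hne (by rw [← hi, hτG i h])
        exact ⟨i, by simp [hiG, hi]⟩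
  refine ⟨?_, ?_, ?_, ?_⟩
  · intro i
    by_cases hiG : i ∈ G
    · simp only [hiG, if_true]
      exact ⟨by omega, le_of_lt (hslt i hiG)⟩
    · simpa [hiG] using hτ i
  · unfold totalCost
    congr 1
    · apply Finset.sum_congr rfl
      intro i _
      by_cases hiG : i ∈ G
      · have h1 : s ≠ f i := ne_of_lt (hslt i hiG)
        have h2 : τ i ≠ f i := by
          have := hres i hiG; have := hτG i hiG; omega
        simp [hiG, h1, h2]
      · simp [hiG]
    · have hcard : (Finset.univ.image (fun i => if i ∈ G then s else τ i)).card
          = (Finset.univ.image τ).card := by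
        rw [himg, Finset.card_insert_of_notMem (fun h => hsnot (Finset.mem_of_mem_erase h)),
          Finset.card_erase_of_mem ht0mem]
        have : 0 < (Finset.univ.image τ).card := Finset.card_pos.mpr ⟨t0, ht0mem⟩
        omega
      rw [hcard]
  · intro i hi
    have := hres i hi; omega
  · obtain ⟨i, hi, hfi⟩ := hattain
    exact ⟨i, hi, by omega⟩
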